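/- Let φ : ℝ → ℝ be a measurable odd function (φ(−u) = −φ(u) for all u). Then ∫_{ℝ^m×ℝ^m} φ(Δ(x)) e^{−H(x)} dx = −∫_{ℝ^m×ℝ^m} φ(Δ(x)) e^{−H(ψ(x))} dx, provided at least one of the two integrands is integrable (in which case both are). -/

import Mathlib

open MeasureTheory

/-- Lemma `lem:main`, odd case, of Beskos–Pillai–Roberts–Sanz-Serna–Stuart,
"Optimal tuning of the Hybrid Monte-Carlo algorithm".
For a measurable, volume-preserving, time-reversible bijection `ψ` of phase space
`ℝ^m × ℝ^m`, with energy increment `Δ(x) = H(ψ x) - H x`, and a measurable odd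
function `φ`, one has
`∫ φ(Δ(x)) e^{-H(x)} dx = - ∫ φ(Δ(x)) e^{-H(ψ x)} dx`,
provided at least one of the two integrands is integrable (in which case both are). -/
theorem stmt_0 (m : ℕ) (hm : 0 < m)
    (H : ((Fin m → ℝ) × (Fin m → ℝ)) → ℝ) (hHmeas : Measurable H)
    (hHS : ∀ x : (Fin m → ℝ) × (Fin m → ℝ), H (x.1, -x.2) = H x)
    (hHint : Integrable (fun x : (Fin m → ℝ) × (Fin m → ℝ) => Real.exp (-H x)))
    (ψ : ((Fin m → ℝ) × (Fin m → ℝ)) ≃ ((Fin m → ℝ) × (Fin m → ℝ)))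
    (hψmeas : Measurable ψ)
    (hψvol : MeasurePreserving ψ volume volume)
    (hψrev : ∀ x : (Fin m → ℝ) × (Fin m → ℝ),
      ((ψ.symm (x.1, -x.2)).1, -(ψ.symm (x.1, -x.2)).2) = ψ x)
    (φ : ℝ → ℝ) (hφmeas : Measurable φ) (hφodd : ∀ u : ℝ, φ (-u) = -φ u)
    (hint : Integrable (fun x => φ (H (ψ x) - H x) * Real.exp (-H x)) ∨
      Integrable (fun x => φ (H (ψ x) - H x) * Real.exp (-H (ψ x)))) :
    Integrable (fun x => φ (H (ψ x) - H x) * Real.exp (-H x)) ∧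
    Integrable (fun x => φ (H (ψ x) - H x) * Real.exp (-H (ψ x))) ∧
    ∫ x, φ (H (ψ x) - H x) * Real.exp (-H x) =
      - ∫ x, φ (H (ψ x) - H x) * Real.exp (-H (ψ x)) := by
  classical
  set S : ((Fin m → ℝ) × (Fin m → ℝ)) → ((Fin m → ℝ) × (Fin m → ℝ)) :=
    fun x => (x.1, -x.2) with hS
  have hSmeas : Measurable S := measurable_fst.prodMk measurable_snd.neg
  have hSS : ∀ x, S (S x) = x := by intro x; simp [hS]
  have hsymm : ∀ y, ψ.symm y = S (ψ (S y)) := by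
    intro y
    have h := hψrev (S y)
    have h' : S (ψ.symm y) = ψ (S y) := by simpa [hS] using h
    have := congrArg S h'
    simpa [hSS] using this
  have hψsymm_meas : Measurable (ψ.symm : _ → _) := by
    have heq : (ψ.symm : _ → _) = S ∘ ψ ∘ S := by
      funext y; simp [hsymm y, Function.comp]
    rw [heq]
    exact hSmeas.comp (hψmeas.comp hSmeas)
  have hSvol : MeasurePreserving S volume volume := by
    have hneg : MeasurePreserving (fun p : (Fin m → ℝ) => -p) volume volume :=
      Measure.measurePreserving_neg volume
    have := (MeasurePreserving.id (volume : Measure (Fin m → ℝ))).prod hneg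
    simpa [hS, ← Measure.volume_eq_prod, Function.comp, Prod.map_def] using this
  let T : ((Fin m → ℝ) × (Fin m → ℝ)) ≃ᵐ ((Fin m → ℝ) × (Fin m → ℝ)) :=
    { toEquiv := ψ.trans (Equiv.prodCongr (Equiv.refl _) (Equiv.neg _))
      measurable_toFun := hSmeas.comp hψmeas
      measurable_invFun := hψsymm_meas.comp hSmeas }
  have hT : ∀ x, T x = S (ψ x) := fun x => rfl
  have hTvol : MeasurePreserving (T : _ → _) volume volume := by
    have := hSvol.comp hψvol
    have heq : (T : _ → _) = S ∘ ψ := by funext x; simp [hT x, Function.comp]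
    rw [heq]; exact this
  have hTemb : MeasurableEmbedding (T : _ → _) := T.measurableEmbedding
  set g : ((Fin m → ℝ) × (Fin m → ℝ)) → ℝ :=
    fun y => φ (H (ψ y) - H y) * Real.exp (-H y) with hg
  have hHSx : ∀ x, H (S x) = H x := fun x => hHS x
  have hψT : ∀ x, ψ (T x) = S x := by
    intro x
    have h' : x = S (ψ (S (ψ x))) := by simpa using hsymm (ψ x)
    have h2 := congrArg S h'
    rw [hSS] at h2
    rw [hT]
    exact h2.symm
  have hkey : ∀ x, g (T x) = -(φ (H (ψ x) - H x) * Real.exp (-H (ψ x))) := by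
    intro x
    have h1 : H (T x) = H (ψ x) := by rw [hT]; exact hHSx (ψ x)
    have h2 : H (ψ (T x)) = H x := by rw [hψT]; exact hHSx x
    have h3 : H (ψ (T x)) - H (T x) = -(H (ψ x) - H x) := by rw [h1, h2]; ring
    simp only [hg]
    rw [h3, hφodd, h1]
    ring
  have hintT : Integrable (g ∘ (T : _ → _)) ↔ Integrable g :=
    hTvol.integrable_comp_emb hTemb
  have hf2eq : (fun x => φ (H (ψ x) - H x) * Real.exp (-H (ψ x))) = fun x => -(g (T x)) := by
    funext x; rw [hkey x]; ring
  have hiff : Integrable g ↔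
      Integrable (fun x => φ (H (ψ x) - H x) * Real.exp (-H (ψ x))) := by
    rw [hf2eq]
    rw [show (fun x => -(g (T x))) = -(g ∘ (T : _ → _)) from rfl, integrable_neg_iff]
    exact hintT.symm
  have hInt1 : Integrable g := by
    rcases hint with h | h
    · exact h
    · exact hiff.mpr h
  refine ⟨hInt1, hiff.mp hInt1, ?_⟩
  have hci : ∫ x, g (T x) = ∫ y, g y := hTvol.integral_comp hTemb g
  calc ∫ x, φ (H (ψ x) - H x) * Real.exp (-H x) = ∫ y, g y := rfl
    _ = ∫ x, g (T x) := hci.symm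
    _ = ∫ x, -(φ (H (ψ x) - H x) * Real.exp (-H (ψ x))) := by
        congr 1; funext x; exact hkey x
    _ = - ∫ x, φ (H (ψ x) - H x) * Real.exp (-H (ψ x)) := integral_neg _
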